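/- arXiv:2501.02897 — 8 statements merged into one kernel-verified Lean document; each statement's English description precedes it below -/
import Mathlib

section
/- Let R be an associative ring with identity, let P(x), L(x), Q(x) be polynomials in R[x] (where the variable x commutes with the coefficients and a polynomial Σ aᵢxⁱ is evaluated at d ∈ R as Σ aᵢdⁱ) with P(x) = L(x)·Q(x). Let d ∈ R be such that the element h := Q(d) is invertible (a unit) in R. Then P(d) = L(h·d·h⁻¹)·Q(d). -/
open Polynomial

lemma conj_pow_aux {R : Type*} [Ring R] (h : Rˣ) (d : R) (n : ℕ) :
    ((h : R) * d * ((h⁻¹ : Rˣ) : R)) ^ n = (h : R) * d ^ n * ((h⁻¹ : Rˣ) : R) := by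
  induction n with
  | zero => simp
  | succ n ih =>
    rw [pow_succ, pow_succ, ih]
    simp [mul_assoc, Units.inv_mul_cancel_left]

lemma key_aux {R : Type*} [Ring R] (Q : Polynomial R) (d : R) (h : Rˣ)
    (hh : (h : R) = Q.eval d) (L : Polynomial R) :
    (L * Q).eval d = L.eval ((h : R) * d * ((h⁻¹ : Rˣ) : R)) * (h : R) := by
  induction L using Polynomial.induction_on' with
  | add p q hp hq => rw [add_mul, eval_add, eval_add, hp, hq, add_mul]
  | monomial n a =>
    rw [eval_monomial, conj_pow_aux]
    have : (monomial n a) * Q = C a * (Q * X ^ n) := by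
      rw [← C_mul_X_pow_eq_monomial, mul_assoc, X_pow_mul]
    rw [this, eval_C_mul, eval_mul_X_pow, ← hh]
    simp [mul_assoc, Units.inv_mul, Units.inv_mul_cancel_left]

/-- Lemma 1 (first part): if `P = L * Q` in `R[x]` and `h := Q(d)` is invertible,
then `P(d) = L(h d h⁻¹) Q(d)`. -/
theorem stmt_0 {R : Type*} [Ring R] (L Q P : Polynomial R) (hP : P = L * Q)
    (d : R) (h : Rˣ) (hh : (h : R) = Q.eval d) :
    P.eval d = L.eval ((h : R) * d * ((h⁻¹ : Rˣ) : R)) * Q.eval d := by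
  rw [hP, key_aux Q d h hh L, hh]
end

section
/- Let D be an associative division ring. Then for any elements x₁, …, x_n ∈ D (not necessarily distinct) there exists a polynomial F(x) ∈ D[x] of degree n such that F(xᵢ) = 0 for every i = 1, …, n. -/
open Polynomial

/-- Theorem 2: over a division ring `D`, for any `n` elements `x 0, …, x (n-1)` there is a
polynomial `F ∈ D[x]` of degree `n` having all of them as roots. -/
theorem stmt_3 {D : Type*} [DivisionRing D] (n : ℕ) (x : Fin n → D) :
    ∃ F : Polynomial D, F.degree = n ∧ ∀ i, F.eval (x i) = 0 := by
  induction n with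
  | zero => exact ⟨1, by simp, fun i => i.elim0⟩
  | succ n ih =>
    obtain ⟨G, hdeg, hroot⟩ := ih (fun i => x i.succ)
    have hG0 : G ≠ 0 := by
      intro h; rw [h, degree_zero] at hdeg; exact (by simp at hdeg)
    set g := G.eval (x 0) with hg
    set c := g * x 0 * g⁻¹ with hc
    have keval : ∀ a : D, ((X - C c) * G).eval a = G.eval a * a - c * G.eval a := by
      intro a
      rw [sub_mul, eval_sub, X_mul, eval_mul_X, eval_C_mul]
    refine ⟨(X - C c) * G, ?_, ?_⟩
    · have hlc : (X - C c).leadingCoeff * G.leadingCoeff ≠ 0 := by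
        rw [leadingCoeff_X_sub_C, one_mul, Ne, leadingCoeff_eq_zero]
        exact hG0
      rw [degree_mul' hlc, degree_X_sub_C, hdeg]
      push_cast
      ring
    · intro i
      refine Fin.cases ?_ ?_ i
      · rw [keval, ← hg, hc]
        by_cases h : g = 0
        · simp [h]
        · rw [mul_assoc, mul_assoc, inv_mul_cancel₀ h, mul_one]
          exact sub_self _
      · intro j
        rw [keval, hroot j]
        simp
end

section
/- Let R be an associative ring with identity, let n ≥ 2, and let x₁ ≠ x₂ be elements of R. If for some k with 1 ≤ k ≤ n−1 the element x₁ᵏ − x₂ᵏ is invertible in R, then there exist a₀, a₁, …, a_{n−1} ∈ R such that both x₁ and x₂ are roots of the polynomial xⁿ + a_{n−1}x^{n−1} + ⋯ + a₁x + a₀, i.e. xᵢⁿ + a_{n−1}xᵢ^{n−1} + ⋯ + a₁xᵢ + a₀ = 0 for i = 1, 2. -/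
/-- Theorem 3: if `x₁ ≠ x₂` and some `x₁ᵏ - x₂ᵏ` (with `1 ≤ k ≤ n-1`) is invertible, then
there is a monic equation `xⁿ + a_{n-1}x^{n-1} + ⋯ + a₁x + a₀ = 0` of degree `n` having
both `x₁` and `x₂` as solutions. -/
theorem stmt_5 {R : Type*} [Ring R] (n : ℕ) (hn : 2 ≤ n) (x₁ x₂ : R) (hx : x₁ ≠ x₂)
    (k : ℕ) (hk1 : 1 ≤ k) (hk2 : k ≤ n - 1) (hu : IsUnit (x₁ ^ k - x₂ ^ k)) :
    ∃ a : ℕ → R,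
      (x₁ ^ n + ∑ i ∈ Finset.range n, a i * x₁ ^ i = 0) ∧
      (x₂ ^ n + ∑ i ∈ Finset.range n, a i * x₂ ^ i = 0) := by
  obtain ⟨u, huu⟩ := hu
  have h0 : 0 < n := by omega
  have hkn : k < n := by omega
  have hk0 : k ≠ 0 := by omega
  set b : R := -(x₁ ^ n - x₂ ^ n) * ↑u⁻¹ with hb
  set c : R := -x₁ ^ n - b * x₁ ^ k with hc
  have key : b * (x₁ ^ k - x₂ ^ k) = -(x₁ ^ n - x₂ ^ n) := by
    rw [hb, ← huu, mul_assoc, Units.inv_mul, mul_one]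
  have key2 : b * x₁ ^ k - b * x₂ ^ k = x₂ ^ n - x₁ ^ n := by
    rw [← mul_sub, key, neg_sub]
  refine ⟨fun i => (if i = 0 then c else 0) + (if i = k then b else 0), ?_, ?_⟩
  · have hsum : ∑ i ∈ Finset.range n,
        ((if i = 0 then c else 0) + (if i = k then b else 0)) * x₁ ^ i
        = c + b * x₁ ^ k := by
      simp [add_mul, ite_mul, Finset.sum_add_distrib, Finset.sum_ite_eq',
        Finset.mem_range, h0, hkn]
    rw [hsum, hc]; abel
  · have hsum : ∑ i ∈ Finset.range n,
        ((if i = 0 then c else 0) + (if i = k then b else 0)) * x₂ ^ i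
        = c + b * x₂ ^ k := by
      simp [add_mul, ite_mul, Finset.sum_add_distrib, Finset.sum_ite_eq',
        Finset.mem_range, h0, hkn]
    rw [hsum, hc]
    have : x₂ ^ n + (-x₁ ^ n - b * x₁ ^ k + b * x₂ ^ k)
        = (x₂ ^ n - x₁ ^ n) - (b * x₁ ^ k - b * x₂ ^ k) := by abel
    rw [this, key2, sub_self]
end

section
/- Let F be a field and let x₁, x₂ be k × k matrices over F. There exists a polynomial of the form x² + a₁x + a₀ with k × k matrix coefficients a₀, a₁ whose roots include both x₁ and x₂ if and only if the rank of the matrix (x₁ − x₂)ᵀ equals the rank of the k × 2k matrix ((x₁ − x₂)ᵀ ∣ (x₂ᵀ)² − (x₁ᵀ)²) obtained by appending the columns of (x₂ᵀ)² − (x₁ᵀ)² to the right of the columns of (x₁ − x₂)ᵀ. -/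
open Matrix

lemma range_fromColumns_aux {F : Type*} [Field F] {k : ℕ}
    (A B : Matrix (Fin k) (Fin k) F) :
    LinearMap.range (Matrix.fromCols A B).mulVecLin =
      LinearMap.range A.mulVecLin ⊔ LinearMap.range B.mulVecLin := by
  apply le_antisymm
  · rintro v ⟨u, rfl⟩
    have hu : u = Sum.elim (u ∘ Sum.inl) (u ∘ Sum.inr) := by
      funext i; cases i <;> rfl
    rw [Matrix.mulVecLin_apply, hu, Matrix.fromCols_mulVec_sumElim]
    exact Submodule.add_mem_sup ⟨u ∘ Sum.inl, rfl⟩ ⟨u ∘ Sum.inr, rfl⟩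
  · rw [sup_le_iff]
    constructor
    · rintro v ⟨u, rfl⟩
      refine ⟨Sum.elim u 0, ?_⟩
      simp [Matrix.fromCols_mulVec_sumElim]
    · rintro v ⟨u, rfl⟩
      refine ⟨Sum.elim 0 u, ?_⟩
      simp [Matrix.fromCols_mulVec_sumElim]

lemma solvable_iff_range_le {F : Type*} [Field F] {k : ℕ}
    (A B : Matrix (Fin k) (Fin k) F) :
    (∃ Y : Matrix (Fin k) (Fin k) F, A * Y = B) ↔
      LinearMap.range B.mulVecLin ≤ LinearMap.range A.mulVecLin := by
  constructor
  · rintro ⟨Y, rfl⟩ v ⟨u, rfl⟩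
    exact ⟨Y *ᵥ u, by simp [Matrix.mulVec_mulVec]⟩
  · intro h
    have hcol : ∀ j, ∃ y : Fin k → F, A *ᵥ y = (A * 0 + B) *ᵥ Pi.single j 1 := by
      intro j
      obtain ⟨y, hy⟩ := h ⟨Pi.single j 1, rfl⟩
      exact ⟨y, by simpa using hy⟩
    choose y hy using hcol
    refine ⟨(Matrix.of fun i j => y j i), ?_⟩
    ext i j
    have := congrFun (hy j) i
    simp only [Matrix.mulVec, dotProduct, Pi.single_apply, mul_ite, mul_one, mul_zero,
      Finset.sum_ite_eq', Finset.mem_univ, if_true] at this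
    simpa [Matrix.mul_apply] using this

/-- Theorem 4: for `k × k` matrices `x₁, x₂` over a field, there is a polynomial
`x² + a₁x + a₀` with both as roots iff `rank (x₁ - x₂)ᵀ = rank ((x₁ - x₂)ᵀ ∣ (x₂ᵀ)² - (x₁ᵀ)²)`. -/
theorem stmt_6 {F : Type*} [Field F] (k : ℕ) (x₁ x₂ : Matrix (Fin k) (Fin k) F) :
    (∃ a₁ a₀ : Matrix (Fin k) (Fin k) F,
        x₁ ^ 2 + a₁ * x₁ + a₀ = 0 ∧ x₂ ^ 2 + a₁ * x₂ + a₀ = 0) ↔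
      ((x₁ - x₂)ᵀ).rank = (Matrix.fromCols (x₁ - x₂)ᵀ ((x₂ᵀ) ^ 2 - (x₁ᵀ) ^ 2)).rank := by
  set A := (x₁ - x₂)ᵀ
  set B := (x₂ᵀ) ^ 2 - (x₁ᵀ) ^ 2
  -- Step 1: reduce the existence of a₁, a₀ to solvability of a linear matrix equation
  have step1 : (∃ a₁ a₀ : Matrix (Fin k) (Fin k) F,
      x₁ ^ 2 + a₁ * x₁ + a₀ = 0 ∧ x₂ ^ 2 + a₁ * x₂ + a₀ = 0) ↔
      ∃ a₁ : Matrix (Fin k) (Fin k) F, a₁ * (x₁ - x₂) = x₂ ^ 2 - x₁ ^ 2 := by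
    constructor
    · rintro ⟨a₁, a₀, h1, h2⟩
      refine ⟨a₁, ?_⟩
      have := congrArg₂ (· - ·) h1 h2
      simp only [sub_zero] at this
      linear_combination (norm := noncomm_ring) this
    · rintro ⟨a₁, h⟩
      refine ⟨a₁, -(x₁ ^ 2 + a₁ * x₁), by exact add_neg_cancel _, ?_⟩
      linear_combination (norm := noncomm_ring) -h
  -- Step 2: transpose
  have step2 : (∃ a₁ : Matrix (Fin k) (Fin k) F, a₁ * (x₁ - x₂) = x₂ ^ 2 - x₁ ^ 2) ↔
      ∃ Y : Matrix (Fin k) (Fin k) F, A * Y = B := by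
    constructor
    · rintro ⟨a₁, h⟩
      refine ⟨a₁ᵀ, ?_⟩
      have := congrArg Matrix.transpose h
      simpa [A, B, Matrix.transpose_mul, Matrix.transpose_sub, pow_two] using this
    · rintro ⟨Y, h⟩
      refine ⟨Yᵀ, ?_⟩
      have := congrArg Matrix.transpose h
      simpa [A, B, Matrix.transpose_mul, Matrix.transpose_sub, pow_two] using this
  rw [step1, step2, solvable_iff_range_le]
  -- Step 3: rank condition
  have hA : A.rank = Module.finrank F (LinearMap.range A.mulVecLin) := rfl
  have hAB : (Matrix.fromCols A B).rank =
      Module.finrank F ↥(LinearMap.range A.mulVecLin ⊔ LinearMap.range B.mulVecLin) := by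
    rw [Matrix.rank, range_fromColumns_aux]
  rw [hA, hAB]
  constructor
  · intro h
    rw [sup_eq_left.mpr h]
  · intro h
    have heq : LinearMap.range A.mulVecLin =
        LinearMap.range A.mulVecLin ⊔ LinearMap.range B.mulVecLin :=
      Submodule.eq_of_le_of_finrank_le le_sup_left h.ge
    exact le_sup_right.trans heq.ge
end

section
/- Let F be a field and let x₁, x₂ be k × k matrices over F. There exists a polynomial of the form x² + a₁x + a₀ with k × k matrix coefficients a₀, a₁ whose roots include both x₁ and x₂ if and only if the rank of the matrix x₁ − x₂ equals the rank of the 2k × k matrix obtained by appending the rows of x₂² − x₁² below the rows of x₁ − x₂. -/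
open Matrix

lemma range_fromColumns {F : Type*} [Field F] {k : ℕ}
    (A B : Matrix (Fin k) (Fin k) F) :
    LinearMap.range (fromCols A B).mulVecLin
      = LinearMap.range A.mulVecLin ⊔ LinearMap.range B.mulVecLin := by
  apply le_antisymm
  · rintro _ ⟨v, rfl⟩
    have : v = Sum.elim (v ∘ Sum.inl) (v ∘ Sum.inr) := by
      ext (i | i) <;> rfl
    rw [mulVecLin_apply, this, fromCols_mulVec_sumElim]
    exact Submodule.add_mem_sup ⟨_, rfl⟩ ⟨_, rfl⟩
  · rw [sup_le_iff]
    constructor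
    · rintro _ ⟨v, rfl⟩
      refine ⟨Sum.elim v 0, ?_⟩
      simp
    · rintro _ ⟨v, rfl⟩
      refine ⟨Sum.elim 0 v, ?_⟩
      simp

lemma exists_mul_eq_iff_rank {F : Type*} [Field F] {k : ℕ}
    (B C : Matrix (Fin k) (Fin k) F) :
    (∃ A : Matrix (Fin k) (Fin k) F, A * B = C) ↔
      B.rank = (fromRows B C).rank := by
  have hT : (fromRows B C)ᵀ = fromCols Bᵀ Cᵀ := transpose_fromRows B C
  have hrank : (fromRows B C).rank = (fromCols Bᵀ Cᵀ).rank := by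
    rw [← hT, rank_transpose]
  have hB : B.rank = Bᵀ.rank := (rank_transpose B).symm
  rw [hrank, hB]
  unfold Matrix.rank
  rw [range_fromColumns]
  constructor
  · rintro ⟨A, hA⟩
    have hle : LinearMap.range Cᵀ.mulVecLin ≤ LinearMap.range Bᵀ.mulVecLin := by
      rintro _ ⟨v, rfl⟩
      refine ⟨Aᵀ *ᵥ v, ?_⟩
      simp only [mulVecLin_apply, mulVec_mulVec, ← transpose_mul, hA]
    rw [sup_eq_left.mpr hle]
  · intro h
    have hle' : LinearMap.range Bᵀ.mulVecLin ≤
        LinearMap.range Bᵀ.mulVecLin ⊔ LinearMap.range Cᵀ.mulVecLin := le_sup_left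
    have heq : LinearMap.range Bᵀ.mulVecLin =
        LinearMap.range Bᵀ.mulVecLin ⊔ LinearMap.range Cᵀ.mulVecLin := by
      apply Submodule.eq_of_le_of_finrank_le hle'
      omega
    have hle : LinearMap.range Cᵀ.mulVecLin ≤ LinearMap.range Bᵀ.mulVecLin := by
      rw [heq]; exact le_sup_right
    -- build A columnwise
    have hcol : ∀ j : Fin k, ∃ v : Fin k → F, Bᵀ *ᵥ v = fun i => C j i := by
      intro j
      have : (fun i => C j i) ∈ LinearMap.range Cᵀ.mulVecLin := by
        refine ⟨Pi.single j 1, ?_⟩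
        ext i
        simp [mulVecLin_apply, mulVec, dotProduct, Pi.single_apply]
      obtain ⟨v, hv⟩ := hle this
      exact ⟨v, hv⟩
    choose v hv using hcol
    refine ⟨(Matrix.of fun j i => v j i)ᵀᵀ, ?_⟩
    ext j i
    have := congrFun (hv j) i
    simp only [mulVec, dotProduct] at this
    simp only [mul_apply, transpose_transpose, Matrix.of_apply]
    rw [← this]
    congr 1
    ext l
    rw [Matrix.transpose_apply, mul_comm]

/-- Theorem 5: for `k × k` matrices `x₁, x₂` over a field, there is a polynomial
`x² + a₁x + a₀` with both as roots iff the rank of `x₁ - x₂` equals the rank of the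
`2k × k` matrix obtained by appending the rows of `x₂² - x₁²` below those of `x₁ - x₂`. -/
theorem stmt_7 {F : Type*} [Field F] (k : ℕ) (x₁ x₂ : Matrix (Fin k) (Fin k) F) :
    (∃ a₁ a₀ : Matrix (Fin k) (Fin k) F,
        x₁ ^ 2 + a₁ * x₁ + a₀ = 0 ∧ x₂ ^ 2 + a₁ * x₂ + a₀ = 0) ↔
      (x₁ - x₂).rank = (Matrix.fromRows (x₁ - x₂) (x₂ ^ 2 - x₁ ^ 2)).rank := by
  rw [← exists_mul_eq_iff_rank]
  constructor
  · rintro ⟨a₁, a₀, h1, h2⟩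
    refine ⟨a₁, ?_⟩
    have heq : x₂ ^ 2 + a₁ * x₂ = x₁ ^ 2 + a₁ * x₁ := add_right_cancel (h2.trans h1.symm)
    rw [mul_sub, sub_eq_sub_iff_add_eq_add, add_comm]
    exact heq.symm
  · rintro ⟨a₁, hA⟩
    refine ⟨a₁, -(x₁ ^ 2 + a₁ * x₁), ?_, ?_⟩
    · exact add_neg_cancel _
    · have h' : x₂ ^ 2 + a₁ * x₂ + -(x₁ ^ 2 + a₁ * x₁)
          = (x₂ ^ 2 - x₁ ^ 2) - (a₁ * x₁ - a₁ * x₂) := by abel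
      rw [h', ← mul_sub, hA, sub_self]
end

section
/- Let F be an infinite field and let x₁, x₂ be k × k matrices over F such that the matrix x₁ − x₂ is not invertible. If the matrix equation a₁(x₁ − x₂) = x₂² − x₁² has at least one solution a₁ ∈ Mat_k(F), then it has infinitely many solutions a₁ ∈ Mat_k(F); consequently, there are infinitely many polynomials of the form x² + a₁x + a₀ with matrix coefficients whose roots include both x₁ and x₂. -/
/-- Proposition 1: over an infinite field, if `x₁ - x₂` is not invertible and the equation
`a₁(x₁ - x₂) = x₂² - x₁²` has a solution, then it has infinitely many solutions, and hence
there are infinitely many polynomials `x² + a₁x + a₀` with both `x₁` and `x₂` as roots. -/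
theorem stmt_8 {F : Type*} [Field F] [Infinite F] (k : ℕ)
    (x₁ x₂ : Matrix (Fin k) (Fin k) F) (hninv : ¬ IsUnit (x₁ - x₂))
    (hsol : ∃ a₁ : Matrix (Fin k) (Fin k) F, a₁ * (x₁ - x₂) = x₂ ^ 2 - x₁ ^ 2) :
    {a₁ : Matrix (Fin k) (Fin k) F | a₁ * (x₁ - x₂) = x₂ ^ 2 - x₁ ^ 2}.Infinite ∧
    {p : Matrix (Fin k) (Fin k) F × Matrix (Fin k) (Fin k) F |
        x₁ ^ 2 + p.1 * x₁ + p.2 = 0 ∧ x₂ ^ 2 + p.1 * x₂ + p.2 = 0}.Infinite := by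
  obtain ⟨a, ha⟩ := hsol
  have hdet : (x₁ - x₂).det = 0 := by
    by_contra h
    exact hninv ((Matrix.isUnit_iff_isUnit_det _).mpr (isUnit_iff_ne_zero.mpr h))
  obtain ⟨v, hv, hvM⟩ := Matrix.exists_vecMul_eq_zero_iff.mpr hdet
  set b : Matrix (Fin k) (Fin k) F := Matrix.of (fun _ j => v j) with hb
  have hbM : b * (x₁ - x₂) = 0 := by
    ext i j
    have := congrFun hvM j
    simpa [hb, Matrix.mul_apply, Matrix.vecMul, dotProduct] using this
  have hbne : b ≠ 0 := by
    obtain ⟨j, hj⟩ := Function.ne_iff.mp hv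
    intro h
    exact hj (by simpa [hb] using congrFun (congrFun h j) j)
  have hinj : Function.Injective (fun c : F => a + c • b) := by
    intro c c' h
    simp only [add_right_inj] at h
    by_contra hne
    apply hbne
    have : (c - c') • b = 0 := by rw [sub_smul, h, sub_self]
    exact (smul_eq_zero.mp this).resolve_left (sub_ne_zero.mpr hne)
  have hmem : ∀ c : F, (a + c • b) ∈
      {a₁ : Matrix (Fin k) (Fin k) F | a₁ * (x₁ - x₂) = x₂ ^ 2 - x₁ ^ 2} := by
    intro c
    simp only [Set.mem_setOf_eq, add_mul, smul_mul_assoc, hbM, ha, smul_zero, add_zero]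
  have h1 : {a₁ : Matrix (Fin k) (Fin k) F | a₁ * (x₁ - x₂) = x₂ ^ 2 - x₁ ^ 2}.Infinite :=
    Set.infinite_of_injective_forall_mem hinj hmem
  refine ⟨h1, ?_⟩
  have hinj2 : Function.Injective
      (fun a₁ : Matrix (Fin k) (Fin k) F => (a₁, -(x₁ ^ 2 + a₁ * x₁))) := by
    intro u w h
    exact (Prod.mk.injEq _ _ _ _ ▸ h).1
  have := Set.Infinite.image (f := fun a₁ => (a₁, -(x₁ ^ 2 + a₁ * x₁)))
    (Set.injOn_of_injective hinj2) h1
  refine this.mono ?_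
  rintro ⟨p1, p2⟩ ⟨a₁, ha₁, heq⟩
  simp only [Prod.mk.injEq] at heq
  obtain ⟨rfl, rfl⟩ := heq
  constructor
  · simp only [neg_add_rev]; abel
  · have h : a₁ * (x₁ - x₂) = x₂ ^ 2 - x₁ ^ 2 := ha₁
    have expand : x₂ ^ 2 + a₁ * x₂ + -(x₁ ^ 2 + a₁ * x₁)
        = (x₂ ^ 2 - x₁ ^ 2) - a₁ * (x₁ - x₂) := by
      rw [mul_sub]; abel
    show x₂ ^ 2 + a₁ * x₂ + -(x₁ ^ 2 + a₁ * x₁) = 0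
    rw [expand, h, sub_self]
end

section
/- Let R be an associative ring with identity and let x₁, x₂ ∈ R be such that x₁ − x₂ is invertible in R. Then there exist unique elements a₁, a₀ ∈ R such that both x₁ and x₂ are roots of the polynomial x² + a₁x + a₀; namely a₁ = (x₂² − x₁²)(x₁ − x₂)⁻¹ and a₀ = −x₁² − a₁x₁. -/
/-- If `x₁ - x₂` is invertible then there are unique `a₁, a₀` such that `x₁` and `x₂` are
both roots of `x² + a₁x + a₀`, namely `a₁ = (x₂² - x₁²)(x₁ - x₂)⁻¹` and
`a₀ = -x₁² - a₁x₁`. -/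
theorem stmt_11 {R : Type*} [Ring R] (x₁ x₂ : R) (u : Rˣ) (hu : (u : R) = x₁ - x₂) :
    ∀ a₁ a₀ : R,
      (x₁ ^ 2 + a₁ * x₁ + a₀ = 0 ∧ x₂ ^ 2 + a₁ * x₂ + a₀ = 0) ↔
        (a₁ = (x₂ ^ 2 - x₁ ^ 2) * ((u⁻¹ : Rˣ) : R) ∧ a₀ = -x₁ ^ 2 - a₁ * x₁) := by
  intro a₁ a₀
  constructor
  · rintro ⟨h1, h2⟩
    have hmul : a₁ * (u : R) = x₂ ^ 2 - x₁ ^ 2 := by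
      rw [hu]
      have : a₁ * (x₁ - x₂) - (x₂ ^ 2 - x₁ ^ 2) =
          (x₁ ^ 2 + a₁ * x₁ + a₀) - (x₂ ^ 2 + a₁ * x₂ + a₀) := by noncomm_ring
      rw [h1, h2, sub_zero] at this
      exact sub_eq_zero.mp this
    have ha₁ : a₁ = (x₂ ^ 2 - x₁ ^ 2) * ((u⁻¹ : Rˣ) : R) := by
      rw [← hmul, mul_assoc, Units.mul_inv, mul_one]
    refine ⟨ha₁, ?_⟩
    have := h1
    rw [show x₁ ^ 2 + a₁ * x₁ + a₀ = a₀ - (-x₁ ^ 2 - a₁ * x₁) by noncomm_ring] at this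
    exact sub_eq_zero.mp this
  · rintro ⟨ha₁, ha₀⟩
    have hmul : a₁ * (x₁ - x₂) = x₂ ^ 2 - x₁ ^ 2 := by
      rw [ha₁, ← hu, mul_assoc, Units.inv_mul, mul_one]
    constructor
    · rw [ha₀]; noncomm_ring
    · rw [ha₀]
      have : x₂ ^ 2 + a₁ * x₂ + (-x₁ ^ 2 - a₁ * x₁) =
          (x₂ ^ 2 - x₁ ^ 2) - a₁ * (x₁ - x₂) := by noncomm_ring
      rw [this, hmul, sub_self]
end

section
/- Let x₁ and x₂ be the complex 2 × 2 matrices x₁ = [[0, 0], [1, −1]] and x₂ = [[0, 0], [0, 1]]. Then there exist no complex 2 × 2 matrices a₀, a₁ such that both x₁ and x₂ are roots of the polynomial x² + a₁x + a₀. -/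
/-- Example 3 (first part): for `x₁ = [[0,0],[1,-1]]` and `x₂ = [[0,0],[0,1]]` over `ℂ`,
there is no polynomial `x² + a₁x + a₀` having both as roots. -/
theorem stmt_14 :
    ¬ ∃ a₁ a₀ : Matrix (Fin 2) (Fin 2) ℂ,
        (!![0, 0; 1, -1] : Matrix (Fin 2) (Fin 2) ℂ) ^ 2 +
          a₁ * (!![0, 0; 1, -1] : Matrix (Fin 2) (Fin 2) ℂ) + a₀ = 0 ∧
        (!![0, 0; 0, 1] : Matrix (Fin 2) (Fin 2) ℂ) ^ 2 +
          a₁ * (!![0, 0; 0, 1] : Matrix (Fin 2) (Fin 2) ℂ) + a₀ = 0 := by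
  rintro ⟨a₁, a₀, h1, h2⟩
  have e2 := congrFun (congrFun (h1.trans h2.symm) 1) 1
  have e3 := congrFun (congrFun (h1.trans h2.symm) 1) 0
  simp [Matrix.add_apply, Matrix.mul_apply, pow_two, Fin.sum_univ_two] at e2 e3
  have h0 : a₁ 1 1 = 0 := by linear_combination -e2 / 2
  rw [h0] at e3
  norm_num at e3
end
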